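/- Decay of the Glassey–Strauss electric bulk kernel: for every v ∈ ℝ³, every ω ∈ ℝ³ with |ω| = 1, and every i ∈ {1,2,3}, one has 1 + v̂·ω > 0 and | (|v̂|² − 1)(v̂ᵢ + ωᵢ) | / (1 + v̂·ω)² ≤ 4 √(1 + |v|²). -/

import Mathlib

open MeasureTheory Set

noncomputable section

/-- Physical space `ℝ³`, realized as functions `Fin 3 → ℝ`. -/
abbrev V3 : Type := Fin 3 → ℝ

/-- Euclidean inner product on `ℝ³`. -/
def dot3 (a b : V3) : ℝ := a 0 * b 0 + a 1 * b 1 + a 2 * b 2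

/-- Euclidean norm on `ℝ³`. -/
def enorm3 (a : V3) : ℝ := Real.sqrt (dot3 a a)

/-- Cross product on `ℝ³`. -/
def cross3 (a b : V3) : V3 :=
  ![a 1 * b 2 - a 2 * b 1, a 2 * b 0 - a 0 * b 2, a 0 * b 1 - a 1 * b 0]

/-- `⟨v⟩ = √(1 + |v|²)`. -/
def jap (v : V3) : ℝ := Real.sqrt (1 + dot3 v v)

/-- Relativistic velocity `v̂ = v / ⟨v⟩`. -/
def vhat (v : V3) : V3 := (jap v)⁻¹ • v

/-- The open upper half space `Ω = {x ∈ ℝ³ : x₃ > 0}`. -/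
def halfSpace : Set V3 := {x : V3 | 0 < x 2}

/-- Embedding of the boundary `∂Ω ≃ ℝ²` into `ℝ³`. -/
def bdryPt (y : ℝ × ℝ) : V3 := ![y.1, y.2, 0]

/-- Projection `(x₁,x₂,x₃) ↦ (x₁,x₂,0)` onto the boundary. -/
def proj0 (x : V3) : V3 := ![x 0, x 1, 0]

/-- Reflection `x̄ = (x₁,x₂,−x₃)`. -/
def refl3 (x : V3) : V3 := ![x 0, x 1, -(x 2)]

/-- Time derivative `∂ₜ` of a space-time function. -/
def pdt (f : ℝ × V3 → ℝ) : ℝ × V3 → ℝ := fun q => fderiv ℝ f q (1, 0)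

/-- Spatial partial derivative `∂_{xᵢ}` of a space-time function. -/
def pdx (i : Fin 3) (f : ℝ × V3 → ℝ) : ℝ × V3 → ℝ := fun q => fderiv ℝ f q (0, Pi.single i 1)

/-- Partial derivative `∂_{xᵢ}` of a function on `ℝ³`. -/
def sdx (i : Fin 3) (u : V3 → ℝ) : V3 → ℝ := fun x => fderiv ℝ u x (Pi.single i 1)

/-- `i`-th component of a space-time vector field. -/
def comp3 (F : ℝ × V3 → V3) (i : Fin 3) : ℝ × V3 → ℝ := fun q => F q i

/-- Spatial divergence of a space-time vector field. -/
def divX (F : ℝ × V3 → V3) (q : ℝ × V3) : ℝ := ∑ i : Fin 3, pdx i (comp3 F i) q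

/-- Spatial curl of a space-time vector field. -/
def curlX (F : ℝ × V3 → V3) (q : ℝ × V3) : V3 :=
  ![pdx 1 (comp3 F 2) q - pdx 2 (comp3 F 1) q,
    pdx 2 (comp3 F 0) q - pdx 0 (comp3 F 2) q,
    pdx 0 (comp3 F 1) q - pdx 1 (comp3 F 0) q]

/-- Curl of a vector field on `ℝ³`. -/
def curlS (F : V3 → V3) (x : V3) : V3 :=
  ![sdx 1 (fun z => F z 2) x - sdx 2 (fun z => F z 1) x,
    sdx 2 (fun z => F z 0) x - sdx 0 (fun z => F z 2) x,
    sdx 0 (fun z => F z 1) x - sdx 1 (fun z => F z 0) x]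

/-- Divergence of a vector field on `ℝ³`. -/
def divS (F : V3 → V3) (x : V3) : ℝ := ∑ i : Fin 3, sdx i (fun z => F z i) x

/-- Spatial Laplacian of a space-time function. -/
def lapST (f : ℝ × V3 → ℝ) (q : ℝ × V3) : ℝ := ∑ i : Fin 3, pdx i (pdx i f) q

/-- Laplacian of a function on `ℝ³`. -/
def lapS (u : V3 → ℝ) (x : V3) : ℝ := ∑ i : Fin 3, sdx i (sdx i u) x

/-- Open space-time domain `(0,T) × Ω`. -/
def stDom (T : ℝ) : Set (ℝ × V3) := Ioo (0 : ℝ) T ×ˢ halfSpace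

/-- Closed space-time domain `[0,T] × Ω̄`. -/
def stDomCl (T : ℝ) : Set (ℝ × V3) := Icc (0 : ℝ) T ×ˢ closure halfSpace

/-- Lateral boundary domain `(0,T) × ∂Ω`, with `∂Ω ≃ ℝ²`. -/
def bDom (T : ℝ) : Set (ℝ × (ℝ × ℝ)) := Ioo (0 : ℝ) T ×ˢ (univ : Set (ℝ × ℝ))


lemma gs_aux (J t u s : ℝ) (hJ : 0 < J) (hJ2 : J^2 = 1+s) (hts : t^2 ≤ s)
    (hu : (J*u)^2 ≤ s + 2*(J*t) + J^2) :
    0 < 1 + t/J ∧ |(s/J^2 - 1) * u| / (1 + t/J)^2 ≤ 4*J := by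
  have hs0 : 0 ≤ s := le_trans (sq_nonneg t) hts
  have hE : 0 < J + t := by nlinarith [sq_nonneg (J+t)]
  have hD : 1 + t/J = (J+t)/J := by field_simp
  refine ⟨by rw [hD]; positivity, ?_⟩
  have h1 : s/J^2 - 1 = -(1/J^2) := by
    rw [div_sub_one (by positivity), hJ2]; ring
  have hEJ : 1 ≤ 2*J*(J+t) := by nlinarith [sq_nonneg (J+t)]
  have hu2 : (J*u)^2 ≤ 2*J*(J+t) := by nlinarith
  have hx3 : 1 ≤ (2*J*(J+t))^3 := one_le_pow₀ hEJ
  have habs : |J*u| ≤ (2*J*(J+t))^2 := by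
    calc |J*u| = Real.sqrt ((J*u)^2) := (Real.sqrt_sq_eq_abs _).symm
      _ ≤ Real.sqrt (((2*J*(J+t))^2)^2) := Real.sqrt_le_sqrt (by
          nlinarith [mul_le_mul_of_nonneg_left hx3 (show (0:ℝ) ≤ 2*J*(J+t) by positivity)])
      _ = (2*J*(J+t))^2 := Real.sqrt_sq (by positivity)
  have hgoal : 1/J^2 * |u| / ((J+t)^2/J^2) = |u| / (J+t)^2 := by
    field_simp
  rw [h1, hD, abs_mul, abs_neg, abs_of_pos (by positivity : (0:ℝ) < 1/J^2),
    div_pow, hgoal, div_le_iff₀ (by positivity)]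
  rw [abs_mul, abs_of_pos hJ] at habs
  nlinarith [abs_nonneg u, habs, hJ, hE]

/-- Decay of the Glassey–Strauss electric bulk kernel. -/
theorem electric_bulk_kernel_decay (v ω : V3) (hω : enorm3 ω = 1) (i : Fin 3) :
    0 < 1 + dot3 (vhat v) ω ∧
    |(dot3 (vhat v) (vhat v) - 1) * (vhat v i + ω i)| / (1 + dot3 (vhat v) ω) ^ 2
      ≤ 4 * Real.sqrt (1 + dot3 v v) := by
  have hω' : dot3 ω ω = 1 := by
    have h0 : 0 ≤ dot3 ω ω := by
      unfold dot3; nlinarith [mul_self_nonneg (ω 0), mul_self_nonneg (ω 1), mul_self_nonneg (ω 2)]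
    have := hω
    unfold enorm3 at this
    nlinarith [Real.sq_sqrt h0, this]
  have hs0 : 0 ≤ dot3 v v := by
    unfold dot3; nlinarith [mul_self_nonneg (v 0), mul_self_nonneg (v 1), mul_self_nonneg (v 2)]
  set s := dot3 v v with hs
  set J := Real.sqrt (1 + s) with hJdef
  have hJ2 : J^2 = 1 + s := Real.sq_sqrt (by linarith)
  have hJpos : 0 < J := Real.sqrt_pos.mpr (by linarith)
  set t := dot3 v ω with ht
  have hts : t^2 ≤ s := by
    simp only [ht, hs, dot3] at *
    nlinarith [sq_nonneg (v 0 * ω 1 - v 1 * ω 0), sq_nonneg (v 0 * ω 2 - v 2 * ω 0),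
      sq_nonneg (v 1 * ω 2 - v 2 * ω 1)]
  have hvh : ∀ j, vhat v j = v j / J := by
    intro j
    simp [vhat, jap, ← hs, ← hJdef, div_eq_inv_mul]
  have hdvω : dot3 (vhat v) ω = t / J := by
    simp only [dot3, hvh, ht]; field_simp
  have hdvv : dot3 (vhat v) (vhat v) = s / J^2 := by
    simp only [dot3, hvh, hs]
    rw [div_mul_div_comm, div_mul_div_comm, div_mul_div_comm, ← add_div,
      ← add_div, sq]
  have hu : (J * (vhat v i + ω i))^2 ≤ s + 2*(J*t) + J^2 := by
    have hJω : J * (vhat v i + ω i) = v i + J * ω i := by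
      rw [hvh]; field_simp
    rw [hJω]
    have hsum : (v 0 + J * ω 0)^2 + (v 1 + J * ω 1)^2 + (v 2 + J * ω 2)^2
        = s + 2*(J*t) + J^2 := by
      have h := hω'
      simp only [ht, hs, dot3] at h ⊢
      linear_combination J^2 * h
    rw [← hsum]
    fin_cases i <;> simp <;> nlinarith [sq_nonneg (v 0 + J * ω 0), sq_nonneg (v 1 + J * ω 1),
      sq_nonneg (v 2 + J * ω 2)]
  rw [hdvω, hdvv]
  exact gs_aux J t (vhat v i + ω i) s hJpos hJ2 hts hu
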